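/- Let k_1 ≤ ... ≤ k_n be real numbers with k_1 + ... + k_q ≥ 0 for some 1 ≤ q ≤ n−1, and let 1 ≤ p ≤ min{q, n−q}. If ∑_{i=1}^p k_i < 0, then |∑_{i=1}^p k_i| ≤ ((q−p)/(n−q)) · (k_1 + ... + k_n). -/

import Mathlib

open Finset

/-- if `k 1 ≤ ⋯ ≤ k n` are `q`-nonnegative for some `1 ≤ q ≤ n - 1`,
`1 ≤ p ≤ min {q, n - q}` and `k 1 + ⋯ + k p < 0`, then
`|k 1 + ⋯ + k p| ≤ ((q - p)/(n - q)) * (k 1 + ⋯ + k n)`. -/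
theorem stmt4 (n p q : ℕ) (k : ℕ → ℝ) (hk : MonotoneOn k (Set.Icc 1 n))
    (hq1 : 1 ≤ q) (hqn : q + 1 ≤ n)
    (hp1 : 1 ≤ p) (hpq : p ≤ q) (hpnq : p + q ≤ n)
    (hqnonneg : 0 ≤ ∑ i ∈ Icc 1 q, k i)
    (hneg : ∑ i ∈ Icc 1 p, k i < 0) :
    |∑ i ∈ Icc 1 p, k i| ≤ ((q : ℝ) - p) / ((n : ℝ) - q) * (∑ i ∈ Icc 1 n, k i) := by
  have hqmem : q ∈ Set.Icc 1 n := ⟨hq1, by omega⟩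
  -- sum splitting
  have hsplit1 : ∑ i ∈ Icc 1 q, k i = (∑ i ∈ Icc 1 p, k i) + ∑ i ∈ Icc (p+1) q, k i := by
    rw [show (1:ℕ) = 0 + 1 from rfl, Finset.Icc_add_one_left_eq_Ioc, Finset.Icc_add_one_left_eq_Ioc, zero_add, Finset.Icc_add_one_left_eq_Ioc,
      ← Finset.sum_Ioc_consecutive _ (Nat.zero_le p) hpq]
  have hsplit2 : ∑ i ∈ Icc 1 n, k i = (∑ i ∈ Icc 1 q, k i) + ∑ i ∈ Icc (q+1) n, k i := by
    rw [show (1:ℕ) = 0 + 1 from rfl, Finset.Icc_add_one_left_eq_Ioc, Finset.Icc_add_one_left_eq_Ioc, zero_add, Finset.Icc_add_one_left_eq_Ioc,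
      ← Finset.sum_Ioc_consecutive _ (Nat.zero_le q) (by omega)]
  -- upper bound middle sum
  have h1 : ∑ i ∈ Icc (p+1) q, k i ≤ ((q:ℝ) - p) * k q := by
    calc ∑ i ∈ Icc (p+1) q, k i ≤ ∑ i ∈ Icc (p+1) q, k q := by
          apply Finset.sum_le_sum
          intro i hi
          simp only [Finset.mem_Icc] at hi
          exact hk ⟨by omega, by omega⟩ hqmem (by omega)
      _ = ((q:ℝ) - p) * k q := by
          rw [Finset.sum_const, Nat.card_Icc]
          have : (q + 1 - (p+1) : ℕ) = q - p := by omega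
          rw [this, nsmul_eq_mul, Nat.cast_sub hpq]
  -- lower bound upper sum
  have h2 : ((n:ℝ) - q) * k q ≤ ∑ i ∈ Icc (q+1) n, k i := by
    calc ((n:ℝ) - q) * k q = ∑ i ∈ Icc (q+1) n, k q := by
          rw [Finset.sum_const, Nat.card_Icc]
          have : (n + 1 - (q+1) : ℕ) = n - q := by omega
          rw [this, nsmul_eq_mul, Nat.cast_sub (by omega)]
      _ ≤ ∑ i ∈ Icc (q+1) n, k i := by
          apply Finset.sum_le_sum
          intro i hi
          simp only [Finset.mem_Icc] at hi
          exact hk hqmem ⟨by omega, hi.2⟩ (by omega)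
  have hnq : (0:ℝ) < (n:ℝ) - q := by
    have : (q:ℝ) + 1 ≤ n := by exact_mod_cast hqn
    linarith
  have hqp : (0:ℝ) ≤ (q:ℝ) - p := by
    have : (p:ℝ) ≤ q := by exact_mod_cast hpq
    linarith
  rw [abs_of_neg hneg, div_mul_eq_mul_div, le_div_iff₀ hnq]
  nlinarith [mul_le_mul_of_nonneg_left h2 hqp, mul_le_mul_of_nonneg_left h1 hqp,
    mul_nonneg hqp hqnonneg]
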